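/- Let X be a compact metric space, let f : X → X be a homeomorphism, and let 𝒜 be the cocycle generated by an α-Hölder function A : X → GL(m,ℝ). Suppose there exist ε > 0 and c_ε > 0 such that ‖𝒜(x,n)‖ ≤ c_ε·e^{εn} and ‖𝒜(x,n)^{−1}‖ ≤ c_ε·e^{εn} for all x ∈ X and n ∈ ℕ. Then for any λ > 2ε/α there exists a constant c > 0 (depending only on A, c_ε, and αλ − 2ε) such that for any δ > 0, any n ∈ ℕ, and any points x, y ∈ X with dist(f^i x, f^i y) ≤ δ·e^{−λ(n−i)} for all i = 0, …, n, one has ‖𝒜(x,n)·𝒜(y,n)^{−1} − Id‖ ≤ c·δ^α. -/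

import Mathlib

noncomputable section

/-- The ℓ² operator norm of a square real matrix. -/
def opNorm {m : ℕ} (M : Matrix (Fin m) (Fin m) ℝ) : ℝ :=
  ‖Matrix.toEuclideanCLM (𝕜 := ℝ) M‖

/-- The metric `d_G(A,B) = ‖A − B‖ + ‖A⁻¹ − B⁻¹‖` on `GL(m,ℝ)`. -/
def dG {m : ℕ} (A B : GL (Fin m) ℝ) : ℝ :=
  opNorm ((A : Matrix (Fin m) (Fin m) ℝ) - (B : Matrix (Fin m) (Fin m) ℝ)) +
    opNorm (((A⁻¹ : GL (Fin m) ℝ) : Matrix (Fin m) (Fin m) ℝ) -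
      ((B⁻¹ : GL (Fin m) ℝ) : Matrix (Fin m) (Fin m) ℝ))

/-- The cocycle generated by `A` over `f`: `coc f A x n = A(f^{n-1}x) ⋯ A(fx) A(x)`. -/
def coc {X : Type*} {m : ℕ} (f : X → X) (A : X → GL (Fin m) ℝ) (x : X) : ℕ → GL (Fin m) ℝ
  | 0 => 1
  | n + 1 => A (f^[n] x) * coc f A x n

/-- Extension of the cocycle to `ℤ`: `cocZ f A x (−n) = (coc f A (f^{−n} x) n)⁻¹`. -/
def cocZ {X : Type*} [TopologicalSpace X] {m : ℕ} (f : X ≃ₜ X) (A : X → GL (Fin m) ℝ)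
    (x : X) : ℤ → GL (Fin m) ℝ
  | (n : ℕ) => coc (⇑f) A x n
  | Int.negSucc n => (coc (⇑f) A ((⇑f.symm)^[n + 1] x) (n + 1))⁻¹

/-- The `k`-th iterate (`k ∈ ℤ`) of a homeomorphism. -/
def iterZ {X : Type*} [TopologicalSpace X] (f : X ≃ₜ X) : ℤ → X → X
  | (n : ℕ) => (⇑f)^[n]
  | Int.negSucc n => (⇑f.symm)^[n + 1]

/-- `A` is α-Hölder continuous (with respect to the operator norm on matrices). -/
def IsHolder {X : Type*} [MetricSpace X] {m : ℕ} (A : X → GL (Fin m) ℝ) (α : ℝ) : Prop :=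
  ∃ C : ℝ, ∀ x y : X,
    opNorm ((A x : Matrix (Fin m) (Fin m) ℝ) - (A y : Matrix (Fin m) (Fin m) ℝ))
      ≤ C * dist x y ^ α

/-- The closing property with constants `c, lam, δ₀`: for any `x` and `n > 0` with
`dist(x, fⁿx) < δ₀` there are `p, y` with `fⁿp = p` such that, with `δ = c·dist(x, fⁿx)`,
for every `i = 0, …, n`: `dist(fⁱx, fⁱp) ≤ δ·exp(−λ·min{i,n−i})`,
`dist(fⁱp, fⁱy) ≤ δ·exp(−λi)` and `dist(fⁱy, fⁱx) ≤ δ·exp(−λ(n−i))`. -/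
def ClosingAt {X : Type*} [MetricSpace X] (f : X ≃ₜ X) (c lam δ₀ : ℝ) : Prop :=
  ∀ x : X, ∀ n : ℕ, 0 < n → dist x ((⇑f)^[n] x) < δ₀ →
    ∃ p y : X, (⇑f)^[n] p = p ∧ ∀ i ≤ n,
      dist ((⇑f)^[i] x) ((⇑f)^[i] p)
          ≤ c * dist x ((⇑f)^[n] x) * Real.exp (-(lam * (min i (n - i) : ℕ))) ∧
      dist ((⇑f)^[i] p) ((⇑f)^[i] y)
          ≤ c * dist x ((⇑f)^[n] x) * Real.exp (-(lam * i)) ∧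
      dist ((⇑f)^[i] y) ((⇑f)^[i] x)
          ≤ c * dist x ((⇑f)^[n] x) * Real.exp (-(lam * ((n - i : ℕ) : ℝ)))

/-- The closing property: `ClosingAt` holds for some positive constants. -/
def ClosingProperty {X : Type*} [MetricSpace X] (f : X ≃ₜ X) : Prop :=
  ∃ c lam δ₀ : ℝ, 0 < c ∧ 0 < lam ∧ 0 < δ₀ ∧ ClosingAt f c lam δ₀

/-- Topological transitivity: some point has a dense (two-sided) orbit. -/
def TopTransitive {X : Type*} [TopologicalSpace X] (f : X ≃ₜ X) : Prop :=
  ∃ z : X, Dense (Set.range fun k : ℤ => iterZ f k z)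

/-- `ρ ∈ ℂ` is an eigenvalue of the real matrix `M` (a root of its characteristic
polynomial over `ℂ`). -/
def IsEigen {m : ℕ} (M : Matrix (Fin m) (Fin m) ℝ) (ρ : ℂ) : Prop :=
  ((M.map Complex.ofReal).charpoly).IsRoot ρ

/-- The maximum of `|ρ|` over the complex eigenvalues `ρ` of `M` (the spectral radius). -/
def maxAbsEigen {m : ℕ} (M : Matrix (Fin m) (Fin m) ℝ) : ℝ :=
  sSup {r : ℝ | ∃ ρ : ℂ, IsEigen M ρ ∧ r = ‖ρ‖}

/-- The minimum of `|ρ|` over the complex eigenvalues `ρ` of `M`. -/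
def minAbsEigen {m : ℕ} (M : Matrix (Fin m) (Fin m) ℝ) : ℝ :=
  sInf {r : ℝ | ∃ ρ : ℂ, IsEigen M ρ ∧ r = ‖ρ‖}

/-- The β-closing property with constants `c, lam, δ₀`, i.e. the closing property with
`δ = c · dist(x, fⁿx)^β` in place of `δ = c · dist(x, fⁿx)`. -/
def ClosingAtβ {X : Type*} [MetricSpace X] (f : X ≃ₜ X) (β c lam δ₀ : ℝ) : Prop :=
  ∀ x : X, ∀ n : ℕ, 0 < n → dist x ((⇑f)^[n] x) < δ₀ →
    ∃ p y : X, (⇑f)^[n] p = p ∧ ∀ i ≤ n,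
      dist ((⇑f)^[i] x) ((⇑f)^[i] p)
          ≤ c * dist x ((⇑f)^[n] x) ^ β * Real.exp (-(lam * (min i (n - i) : ℕ))) ∧
      dist ((⇑f)^[i] p) ((⇑f)^[i] y)
          ≤ c * dist x ((⇑f)^[n] x) ^ β * Real.exp (-(lam * i)) ∧
      dist ((⇑f)^[i] y) ((⇑f)^[i] x)
          ≤ c * dist x ((⇑f)^[n] x) ^ β * Real.exp (-(lam * ((n - i : ℕ) : ℝ)))

lemma opNorm_mul_le' {m : ℕ} (M N : Matrix (Fin m) (Fin m) ℝ) :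
    opNorm (M * N) ≤ opNorm M * opNorm N := by
  unfold opNorm; rw [map_mul]; exact norm_mul_le _ _

lemma opNorm_nonneg' {m : ℕ} (M : Matrix (Fin m) (Fin m) ℝ) : 0 ≤ opNorm M :=
  norm_nonneg _

lemma coc_add' {X : Type*} {m : ℕ} (f : X → X) (A : X → GL (Fin m) ℝ) (x : X) (i j : ℕ) :
    coc f A x (j + i) = coc f A (f^[i] x) j * coc f A x i := by
  induction j with
  | zero => simp [coc]
  | succ j ih =>
    have h1 : j + 1 + i = (j + i) + 1 := by ring
    rw [h1]
    show A (f^[j+i] x) * coc f A x (j + i) = A (f^[j] (f^[i] x)) * coc f A (f^[i] x) j * coc f A x i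
    rw [ih, Function.iterate_add_apply f j i x, mul_assoc]

lemma coc_zero' {X : Type*} {m : ℕ} (f : X → X) (A : X → GL (Fin m) ℝ) (x : X) :
    coc f A x 0 = 1 := rfl

lemma coc_succ' {X : Type*} {m : ℕ} (f : X → X) (A : X → GL (Fin m) ℝ) (x : X) (i : ℕ) :
    coc f A x (i + 1) = A (f^[i] x) * coc f A x i := rfl

/-- **Comparison of slowly growing cocycles along exponentially converging orbit
segments (backward version).** If `‖𝒜(x,n)‖, ‖𝒜(x,n)⁻¹‖ ≤ c_ε·e^{εn}` and
`λ > 2ε/α`, then `dist(fⁱx, fⁱy) ≤ δ·e^{−λ(n−i)}` for `i = 0,…,n` implies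
`‖𝒜(x,n)·𝒜(y,n)⁻¹ − Id‖ ≤ c·δ^α`. -/
theorem close_orbits_backward {X : Type*} [MetricSpace X] [CompactSpace X] (f : X ≃ₜ X)
    {m : ℕ} (α : ℝ) (hα : 0 < α) (A : X → GL (Fin m) ℝ) (hH : IsHolder A α)
    (ε cε : ℝ) (hε : 0 < ε) (hcε : 0 < cε)
    (hgrow : ∀ (x : X) (n : ℕ),
      opNorm ((coc (⇑f) A x n : GL (Fin m) ℝ) : Matrix (Fin m) (Fin m) ℝ)
          ≤ cε * Real.exp (ε * n) ∧
      opNorm (((coc (⇑f) A x n)⁻¹ : GL (Fin m) ℝ) : Matrix (Fin m) (Fin m) ℝ)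
          ≤ cε * Real.exp (ε * n))
    (lam : ℝ) (hlam : 2 * ε / α < lam) :
    ∃ c : ℝ, 0 < c ∧ ∀ δ : ℝ, 0 < δ → ∀ (n : ℕ) (x y : X),
      (∀ i ≤ n, dist ((⇑f)^[i] x) ((⇑f)^[i] y) ≤ δ * Real.exp (-(lam * ((n - i : ℕ) : ℝ)))) →
      opNorm (((coc (⇑f) A x n * (coc (⇑f) A y n)⁻¹ : GL (Fin m) ℝ) :
        Matrix (Fin m) (Fin m) ℝ) - 1) ≤ c * δ ^ α := by
  obtain ⟨C, hC⟩ := hH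
  set C' : ℝ := max C 1 with hC'def
  have hC'pos : (0:ℝ) < C' := lt_of_lt_of_le one_pos (le_max_right _ _)
  have hHol : ∀ a b : X,
      opNorm ((A a : Matrix (Fin m) (Fin m) ℝ) - (A b : Matrix (Fin m) (Fin m) ℝ))
        ≤ C' * dist a b ^ α := fun a b =>
    (hC a b).trans (mul_le_mul_of_nonneg_right (le_max_left _ _)
      (Real.rpow_nonneg dist_nonneg α))
  set η : ℝ := α * lam - 2 * ε with hηdef
  have hηpos : 0 < η := by
    have h2 := (div_lt_iff₀ hα).mp hlam
    simp only [hηdef]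
    nlinarith
  set r : ℝ := Real.exp (-η) with hrdef
  have hr0 : 0 < r := Real.exp_pos _
  have hr1 : r < 1 := by
    rw [hrdef, Real.exp_lt_one_iff]
    linarith
  have h1r : 0 < 1 - r := by linarith
  have hsum : ∀ n : ℕ, ∑ i ∈ Finset.range n, r ^ (n - i) ≤ (1 - r)⁻¹ := by
    intro n
    have h1 : ∑ i ∈ Finset.range n, r ^ (n - i) = ∑ i ∈ Finset.range n, r ^ (i + 1) := by
      rw [← Finset.sum_range_reflect (fun j => r ^ (j + 1)) n]
      refine Finset.sum_congr rfl fun i hi => ?_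
      rw [Finset.mem_range] at hi
      congr 1
      omega
    rw [h1]
    calc ∑ i ∈ Finset.range n, r ^ (i + 1)
        ≤ ∑ i ∈ Finset.range n, r ^ i :=
          Finset.sum_le_sum fun i _ => pow_le_pow_of_le_one hr0.le hr1.le (Nat.le_succ i)
      _ ≤ (1 - r)⁻¹ := by
          rw [← tsum_geometric_of_lt_one hr0.le hr1]
          exact Summable.sum_le_tsum _ (fun i _ => pow_nonneg hr0.le i)
            (summable_geometric_of_lt_one hr0.le hr1)
  refine ⟨cε * cε * C' * (1 - r)⁻¹, by positivity, ?_⟩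
  intro δ hδ n x y hxy
  have hδα : (0:ℝ) ≤ δ ^ α := Real.rpow_nonneg hδ.le α
  set T : ℕ → Matrix (Fin m) (Fin m) ℝ := fun i =>
    ((coc (⇑f) A x n * (coc (⇑f) A x i)⁻¹ * coc (⇑f) A y i * (coc (⇑f) A y n)⁻¹ :
      GL (Fin m) ℝ) : Matrix (Fin m) (Fin m) ℝ) with hTdef
  have hT0 : T 0 = ((coc (⇑f) A x n * (coc (⇑f) A y n)⁻¹ : GL (Fin m) ℝ) :
      Matrix (Fin m) (Fin m) ℝ) := by
    simp only [hTdef]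
    congr 1
    rw [coc_zero', coc_zero']
    group
  have hTn : T n = 1 := by
    simp only [hTdef]
    have h1 : (coc (⇑f) A x n * (coc (⇑f) A x n)⁻¹ * coc (⇑f) A y n * (coc (⇑f) A y n)⁻¹ :
        GL (Fin m) ℝ) = 1 := by group
    rw [h1, Units.val_one]
  have hkey : ((coc (⇑f) A x n * (coc (⇑f) A y n)⁻¹ : GL (Fin m) ℝ) :
      Matrix (Fin m) (Fin m) ℝ) - 1 = ∑ i ∈ Finset.range n, (T i - T (i + 1)) := by
    rw [Finset.sum_range_sub' T n, hT0, hTn]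
  have hterm : ∀ i < n, opNorm (T i - T (i + 1)) ≤ cε * cε * C' * δ ^ α * r ^ (n - i) := by
    intro i hi
    have hi1 : i + 1 ≤ n := hi
    set M : GL (Fin m) ℝ := coc (⇑f) A x n * (coc (⇑f) A x (i + 1))⁻¹ with hMdef
    set N : GL (Fin m) ℝ := coc (⇑f) A y i * (coc (⇑f) A y n)⁻¹ with hNdef
    have hTi : T i = ((M * A ((⇑f)^[i] x) * N : GL (Fin m) ℝ) : Matrix (Fin m) (Fin m) ℝ) := by
      simp only [hTdef]
      congr 1
      rw [hMdef, hNdef, coc_succ']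
      group
    have hTi1 : T (i + 1) =
        ((M * A ((⇑f)^[i] y) * N : GL (Fin m) ℝ) : Matrix (Fin m) (Fin m) ℝ) := by
      simp only [hTdef]
      congr 1
      rw [hMdef, hNdef, coc_succ' (⇑f) A x, coc_succ' (⇑f) A y]
      group
    have hdiff : T i - T (i + 1) = (M : Matrix (Fin m) (Fin m) ℝ) *
        ((A ((⇑f)^[i] x) : Matrix (Fin m) (Fin m) ℝ) - (A ((⇑f)^[i] y) : Matrix (Fin m) (Fin m) ℝ)) *
        (N : Matrix (Fin m) (Fin m) ℝ) := by
      rw [hTi, hTi1]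
      simp only [Units.val_mul]
      noncomm_ring
    have hMval : (M : Matrix (Fin m) (Fin m) ℝ) =
        ((coc (⇑f) A ((⇑f)^[i + 1] x) (n - (i + 1)) : GL (Fin m) ℝ) :
          Matrix (Fin m) (Fin m) ℝ) := by
      congr 1
      rw [hMdef, mul_inv_eq_iff_eq_mul, ← coc_add', Nat.sub_add_cancel hi1]
    have hNval : (N : Matrix (Fin m) (Fin m) ℝ) =
        (((coc (⇑f) A ((⇑f)^[i] y) (n - i))⁻¹ : GL (Fin m) ℝ) :
          Matrix (Fin m) (Fin m) ℝ) := by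
      congr 1
      have h := coc_add' (⇑f) A y i (n - i)
      rw [Nat.sub_add_cancel (le_of_lt hi)] at h
      rw [hNdef, h]
      group
    have hM : opNorm (M : Matrix (Fin m) (Fin m) ℝ) ≤ cε * Real.exp (ε * ((n - i : ℕ) : ℝ)) := by
      rw [hMval]
      refine (hgrow _ _).1.trans ?_
      gcongr
      omega
    have hN : opNorm (N : Matrix (Fin m) (Fin m) ℝ) ≤ cε * Real.exp (ε * ((n - i : ℕ) : ℝ)) := by
      rw [hNval]
      exact (hgrow _ _).2
    have hmid : opNorm ((A ((⇑f)^[i] x) : Matrix (Fin m) (Fin m) ℝ) -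
        (A ((⇑f)^[i] y) : Matrix (Fin m) (Fin m) ℝ))
        ≤ C' * (δ ^ α * Real.exp (-(lam * ((n - i : ℕ) : ℝ)) * α)) := by
      refine (hHol _ _).trans ?_
      refine mul_le_mul_of_nonneg_left ?_ hC'pos.le
      calc dist ((⇑f)^[i] x) ((⇑f)^[i] y) ^ α
          ≤ (δ * Real.exp (-(lam * ((n - i : ℕ) : ℝ)))) ^ α := by
            gcongr
            exact hxy i (le_of_lt hi)
        _ = δ ^ α * Real.exp (-(lam * ((n - i : ℕ) : ℝ)) * α) := by
            rw [Real.mul_rpow hδ.le (Real.exp_nonneg _), ← Real.exp_mul]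
    have hB1 : (0:ℝ) ≤ cε * Real.exp (ε * ((n - i : ℕ) : ℝ)) :=
      mul_nonneg hcε.le (Real.exp_nonneg _)
    have hB2 : (0:ℝ) ≤ C' * (δ ^ α * Real.exp (-(lam * ((n - i : ℕ) : ℝ)) * α)) :=
      mul_nonneg hC'pos.le (mul_nonneg hδα (Real.exp_nonneg _))
    calc opNorm (T i - T (i + 1))
        = opNorm ((M : Matrix (Fin m) (Fin m) ℝ) *
            ((A ((⇑f)^[i] x) : Matrix (Fin m) (Fin m) ℝ) -
              (A ((⇑f)^[i] y) : Matrix (Fin m) (Fin m) ℝ)) *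
            (N : Matrix (Fin m) (Fin m) ℝ)) := by rw [hdiff]
      _ ≤ opNorm ((M : Matrix (Fin m) (Fin m) ℝ) *
            ((A ((⇑f)^[i] x) : Matrix (Fin m) (Fin m) ℝ) -
              (A ((⇑f)^[i] y) : Matrix (Fin m) (Fin m) ℝ))) *
            opNorm (N : Matrix (Fin m) (Fin m) ℝ) := opNorm_mul_le' _ _
      _ ≤ (opNorm (M : Matrix (Fin m) (Fin m) ℝ) *
            opNorm ((A ((⇑f)^[i] x) : Matrix (Fin m) (Fin m) ℝ) -
              (A ((⇑f)^[i] y) : Matrix (Fin m) (Fin m) ℝ))) *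
            opNorm (N : Matrix (Fin m) (Fin m) ℝ) :=
          mul_le_mul_of_nonneg_right (opNorm_mul_le' _ _) (opNorm_nonneg' _)
      _ ≤ (cε * Real.exp (ε * ((n - i : ℕ) : ℝ)) *
            (C' * (δ ^ α * Real.exp (-(lam * ((n - i : ℕ) : ℝ)) * α)))) *
            (cε * Real.exp (ε * ((n - i : ℕ) : ℝ))) :=
          mul_le_mul (mul_le_mul hM hmid (opNorm_nonneg' _) hB1) hN (opNorm_nonneg' _)
            (mul_nonneg hB1 hB2)
      _ = cε * cε * C' * δ ^ α *
            (Real.exp (ε * ((n - i : ℕ) : ℝ)) * Real.exp (ε * ((n - i : ℕ) : ℝ)) *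
              Real.exp (-(lam * ((n - i : ℕ) : ℝ)) * α)) := by ring
      _ = cε * cε * C' * δ ^ α * r ^ (n - i) := by
          rw [← Real.exp_add, ← Real.exp_add, hrdef, ← Real.exp_nat_mul]
          congr 1
          simp only [hηdef]
          ring
  calc opNorm (((coc (⇑f) A x n * (coc (⇑f) A y n)⁻¹ : GL (Fin m) ℝ) :
        Matrix (Fin m) (Fin m) ℝ) - 1)
      = opNorm (∑ i ∈ Finset.range n, (T i - T (i + 1))) := by rw [hkey]
    _ ≤ ∑ i ∈ Finset.range n, opNorm (T i - T (i + 1)) := by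
        unfold opNorm
        rw [map_sum]
        exact norm_sum_le _ _
    _ ≤ ∑ i ∈ Finset.range n, cε * cε * C' * δ ^ α * r ^ (n - i) :=
        Finset.sum_le_sum fun i hi => hterm i (Finset.mem_range.mp hi)
    _ = cε * cε * C' * δ ^ α * ∑ i ∈ Finset.range n, r ^ (n - i) := by
        rw [Finset.mul_sum]
    _ ≤ cε * cε * C' * δ ^ α * (1 - r)⁻¹ := by
        refine mul_le_mul_of_nonneg_left (hsum n) ?_
        have : (0:ℝ) ≤ cε * cε * C' := by positivity
        exact mul_nonneg this hδα
    _ = cε * cε * C' * (1 - r)⁻¹ * δ ^ α := by ring
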